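/- The max-relative entropy satisfies the data-processing inequality: for any positive trace-preserving linear map N and any density operators ω, τ with supp(ω) ⊆ supp(τ), D_max(N(ω)‖N(τ)) ≤ D_max(ω‖τ). -/

import Mathlib

open Matrix
open scoped ComplexOrder NNReal

section Aux

variable {n : Type*} [Fintype n] [DecidableEq n]

lemma trace_eq_sum_eigenvalues' {A : Matrix n n ℂ} (hA : A.IsHermitian) :
    A.trace = ∑ i, (hA.eigenvalues i : ℂ) := by
  conv_lhs => rw [hA.spectral_theorem]
  rw [Unitary.conjStarAlgAut_apply]
  rw [trace_mul_cycle]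
  rw [show (star hA.eigenvectorUnitary : Matrix n n ℂ) * hA.eigenvectorUnitary = 1 from
    hA.eigenvectorUnitary.2.1]
  rw [one_mul, trace_diagonal]
  rfl

lemma diag_nonneg_of_psd {A : Matrix n n ℂ} (hA : A.PosSemidef) (i : n) : 0 ≤ A i i := by
  have := hA.dotProduct_mulVec_nonneg (Pi.single i 1)
  simpa [dotProduct, mulVec, Pi.single_apply, Finset.sum_ite_eq] using this

lemma trace_nonneg_of_psd {A : Matrix n n ℂ} (hA : A.PosSemidef) : 0 ≤ A.trace := by
  rw [trace]
  exact Finset.sum_nonneg fun i _ => diag_nonneg_of_psd hA i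

lemma one_sub_psd {ω : Matrix n n ℂ} (hω : ω.PosSemidef) (hωtr : ω.trace = 1) :
    ((1 : Matrix n n ℂ) - ω).PosSemidef := by
  have he := hω.1
  have hsum : ∑ i, he.eigenvalues i = 1 := by
    have := trace_eq_sum_eigenvalues' he
    rw [hωtr] at this
    exact_mod_cast this.symm
  have hle : ∀ i, he.eigenvalues i ≤ 1 := by
    intro i
    rw [← hsum]
    exact Finset.single_le_sum (fun j _ => hω.eigenvalues_nonneg j) (Finset.mem_univ i)
  have hU : (he.eigenvectorUnitary : Matrix n n ℂ) * (star he.eigenvectorUnitary : Matrix n n ℂ)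
      = 1 := he.eigenvectorUnitary.2.2
  have key : (1 : Matrix n n ℂ) - ω
      = (he.eigenvectorUnitary : Matrix n n ℂ) *
        diagonal (fun i => (1 : ℂ) - (he.eigenvalues i : ℂ)) *
        (star he.eigenvectorUnitary : Matrix n n ℂ) := by
    have hd : diagonal (fun i => (1 : ℂ) - (he.eigenvalues i : ℂ))
        = 1 - diagonal (RCLike.ofReal ∘ he.eigenvalues) := by
      rw [← diagonal_one, diagonal_sub]
      rfl
    rw [hd, mul_sub, mul_one, sub_mul, hU]
    conv_lhs => rw [he.spectral_theorem, Unitary.conjStarAlgAut_apply]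
  rw [key]
  refine PosSemidef.mul_mul_conjTranspose_same ?_ _
  refine posSemidef_diagonal_iff.mpr fun i => ?_
  rw [show (1 : ℂ) - (he.eigenvalues i : ℂ) = ((1 - he.eigenvalues i : ℝ) : ℂ) by push_cast; ring]
  rw [Complex.zero_le_real]
  linarith [hle i]

lemma exists_smul_sub_psd (ω τ : Matrix n n ℂ)
    (hω : ω.PosSemidef) (hωtr : ω.trace = 1) (hτ : τ.PosSemidef)
    (hsupp : ∀ v : n → ℂ, τ *ᵥ v = 0 → ω *ᵥ v = 0) :
    ∃ c : ℝ, 0 < c ∧ ((c : ℂ) • τ - ω).PosSemidef := by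
  have he := hτ.1
  set U : Matrix n n ℂ := (he.eigenvectorUnitary : Matrix n n ℂ) with hUdef
  set e : n → ℝ := he.eigenvalues with hedef
  have hU1 : star U * U = 1 := he.eigenvectorUnitary.2.1
  have hU2 : U * star U = 1 := he.eigenvectorUnitary.2.2
  set D : Matrix n n ℂ := diagonal (RCLike.ofReal ∘ e) with hDdef
  have hspec : τ = U * D * star U := he.spectral_theorem
  set d0 : n → ℂ := fun i => if e i = 0 then 1 else 0 with hd0def
  set K : Matrix n n ℂ := U * diagonal d0 * star U with hKdef
  -- τ * K = 0
  have hDd0 : D * diagonal d0 = 0 := by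
    rw [hDdef, diagonal_mul_diagonal]
    have h0 : (fun i => (RCLike.ofReal ∘ e) i * d0 i) = fun _ => (0 : ℂ) := by
      funext i
      by_cases h : e i = 0 <;> simp [hd0def, h]
    rw [h0, diagonal_zero]
  have hτK : τ * K = 0 := by
    rw [hspec, hKdef]
    simp only [mul_assoc]
    rw [← mul_assoc (star U) U, hU1, one_mul, ← mul_assoc D, hDd0, zero_mul, mul_zero]
  have hωK : ω * K = 0 := by
    ext i j
    have hv : τ *ᵥ (fun k => K k j) = 0 := by
      funext i'
      have := congrFun (congrFun hτK i') j
      simpa [mulVec, dotProduct, mul_apply] using this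
    have := congrFun (hsupp _ hv) i
    simpa [mulVec, dotProduct, mul_apply] using this
  have hd0star : star d0 = d0 := by
    funext i
    by_cases h : e i = 0 <;> simp [hd0def, h]
  have hKH : Kᴴ = K := by
    simp only [hKdef, star_eq_conjTranspose, conjTranspose_mul, conjTranspose_conjTranspose,
      diagonal_conjTranspose, hd0star, Matrix.mul_assoc]
  have hKω : K * ω = 0 := by
    have h := congrArg conjTranspose hωK
    rwa [conjTranspose_mul, hKH, hω.1.eq, conjTranspose_zero] at h
  set P : Matrix n n ℂ := 1 - K with hPdef
  have hPω : P * ω * P = ω := by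
    rw [hPdef, sub_mul, one_mul, hKω, sub_zero, mul_sub, mul_one, hωK, sub_zero]
  have hPH : Pᴴ = P := by
    rw [hPdef, conjTranspose_sub, conjTranspose_one, hKH]
  have hKK : K * K = K := by
    rw [hKdef]
    simp only [mul_assoc]
    rw [← mul_assoc (star U) U, hU1, one_mul, ← mul_assoc (diagonal d0),
      diagonal_mul_diagonal]
    have : (fun i => d0 i * d0 i) = d0 := by
      funext i
      by_cases h : e i = 0 <;> simp [hd0def, h]
    rw [this]
  have hPP : P * P = P := by
    rw [hPdef, sub_mul, one_mul, mul_sub, mul_one, hKK, sub_self, sub_zero]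
  have hPsub : (P - ω).PosSemidef := by
    have h1 := (one_sub_psd hω hωtr).mul_mul_conjTranspose_same P
    have key : P * (1 - ω) * Pᴴ = P - ω := by
      rw [hPH]
      have expand : P * (1 - ω) * P = P * P - P * ω * P := by noncomm_ring
      rw [expand, hPP, hPω]
    rwa [key] at h1
  -- the constant
  set c : ℝ := 1 + ∑ i, (if e i = 0 then 0 else (e i)⁻¹) with hcdef
  have hterm : ∀ i ∈ Finset.univ, (0:ℝ) ≤ if e i = 0 then 0 else (e i)⁻¹ := by
    intro i _
    by_cases h : e i = 0
    · simp [h]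
    · simp only [h, if_false]
      exact inv_nonneg.mpr (hτ.eigenvalues_nonneg i)
  have hc : 0 < c := by
    have := Finset.sum_nonneg hterm
    rw [hcdef]; linarith
  have hce : ∀ i, e i ≠ 0 → 1 ≤ c * e i := by
    intro i h
    have hpos : 0 < e i := lt_of_le_of_ne (hτ.eigenvalues_nonneg i) (Ne.symm h)
    have hsumge : (e i)⁻¹ ≤ ∑ j, (if e j = 0 then 0 else (e j)⁻¹) := by
      have := Finset.single_le_sum hterm (Finset.mem_univ i)
      simpa [h] using this
    have hinv : (e i)⁻¹ * e i = 1 := inv_mul_cancel₀ h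
    have hm := mul_le_mul_of_nonneg_right hsumge hpos.le
    rw [hinv] at hm
    have hck : c * e i = e i + (∑ j, (if e j = 0 then 0 else (e j)⁻¹)) * e i := by
      rw [hcdef]; ring
    rw [hck]
    linarith
  -- c • τ - P is PSD
  set d1 : n → ℂ := fun i => if e i = 0 then 0 else 1 with hd1def
  have hP : P = U * diagonal d1 * star U := by
    have hd : diagonal d1 = 1 - diagonal d0 := by
      rw [← diagonal_one, diagonal_sub]
      refine congrArg diagonal (funext fun i => ?_)
      by_cases h : e i = 0 <;> simp [hd0def, hd1def, h]
    rw [hPdef, hd, mul_sub, mul_one, sub_mul, hU2, hKdef]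
  have hτeq : (c : ℂ) • τ = U * diagonal (fun i => (c : ℂ) * (e i : ℂ)) * star U := by
    rw [hspec]
    have hd : diagonal (fun i => (c : ℂ) * (e i : ℂ)) = (c : ℂ) • D := by
      rw [hDdef, ← diagonal_smul]
      exact congrArg diagonal (funext fun i => by simp [smul_eq_mul])
    rw [hd, mul_smul_comm, smul_mul_assoc]
  have hτP : ((c : ℂ) • τ - P).PosSemidef := by
    have hdiag : (diagonal (fun i => (c : ℂ) * (e i : ℂ) - d1 i) : Matrix n n ℂ).PosSemidef := by
      refine posSemidef_diagonal_iff.mpr fun i => ?_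
      by_cases h : e i = 0
      · simp [hd1def, h]
      · have h1 := hce i h
        rw [hd1def]
        simp only [h, if_false]
        rw [show (c : ℂ) * (e i : ℂ) - 1 = ((c * e i - 1 : ℝ) : ℂ) by push_cast; ring]
        rw [Complex.zero_le_real]
        linarith
    have hmm := hdiag.mul_mul_conjTranspose_same U
    rw [← star_eq_conjTranspose] at hmm
    have hkey : (c : ℂ) • τ - P
        = U * diagonal (fun i => (c : ℂ) * (e i : ℂ) - d1 i) * star U := by
      rw [hτeq, hP, ← sub_mul, ← mul_sub, diagonal_sub]
    rwa [hkey]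
  refine ⟨c, hc, ?_⟩
  have := hτP.add hPsub
  rwa [sub_add_sub_cancel] at this

end Aux

lemma cfc_two_rpow (l : ℝ) : ((2:ℝ) ^ l : ℂ) = (((2:ℝ) ^ l : ℝ) : ℂ) := by
  have h1 : (((2:ℝ) : ℂ)) = algebraMap ℝ≥0 ℂ (2:ℝ≥0) := by
    rw [IsScalarTower.algebraMap_apply ℝ≥0 ℝ ℂ]
    norm_num
  rw [h1, CFC.rpow_algebraMap, IsScalarTower.algebraMap_apply ℝ≥0 ℝ ℂ]
  norm_num [NNReal.coe_rpow]

/-- The max-relative entropy `D_max(ω‖τ) := inf {λ : ℝ | ω ≤ 2^λ τ}`, where `ω ≤ 2^λ τ` means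
that `2^λ τ − ω` is positive semidefinite. -/
noncomputable def Dmax {n : Type*} [Fintype n] (ω τ : Matrix n n ℂ) : ℝ :=
  sInf {l : ℝ | (((2 : ℝ) ^ l : ℂ) • τ - ω).PosSemidef}

/-- The max-relative entropy satisfies the data-processing inequality: for any positive
trace-preserving linear map `N` and density operators `ω, τ` with `supp ω ⊆ supp τ`,
`D_max(N(ω)‖N(τ)) ≤ D_max(ω‖τ)`. -/
theorem Dmax_data_processing
    {n m : Type*} [Fintype n] [Fintype m]
    (N : Matrix n n ℂ →ₗ[ℂ] Matrix m m ℂ)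
    (hNpos : ∀ A : Matrix n n ℂ, A.PosSemidef → (N A).PosSemidef)
    (hNtr : ∀ A : Matrix n n ℂ, (N A).trace = A.trace)
    (ω τ : Matrix n n ℂ)
    (hω : ω.PosSemidef) (hωtr : ω.trace = 1)
    (hτ : τ.PosSemidef) (hτtr : τ.trace = 1)
    (hsupp : ∀ v : n → ℂ, τ *ᵥ v = 0 → ω *ᵥ v = 0) :
    Dmax (N ω) (N τ) ≤ Dmax ω τ := by
  classical
  rw [Dmax, Dmax]
  simp only [cfc_two_rpow]
  set S : Set ℝ := {l : ℝ | ((((2 : ℝ) ^ l : ℝ) : ℂ) • τ - ω).PosSemidef} with hSdef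
  set T : Set ℝ := {l : ℝ | ((((2 : ℝ) ^ l : ℝ) : ℂ) • N τ - N ω).PosSemidef} with hTdef
  have hsub : S ⊆ T := by
    intro l hl
    have := hNpos _ hl
    rwa [map_sub, _root_.map_smul] at this
  have hSne : S.Nonempty := by
    obtain ⟨c, hc, hpsd⟩ := exists_smul_sub_psd ω τ hω hωtr hτ hsupp
    refine ⟨Real.logb 2 c, ?_⟩
    rw [hSdef, Set.mem_setOf_eq,
      show (2 : ℝ) ^ Real.logb 2 c = c from Real.rpow_logb (by norm_num) (by norm_num) hc]
    exact hpsd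
  have hTbdd : BddBelow T := by
    refine ⟨0, fun l hl => ?_⟩
    have htr := trace_nonneg_of_psd hl
    rw [trace_sub, trace_smul, hNtr, hNtr, hωtr, hτtr, smul_eq_mul, mul_one] at htr
    rw [show ((((2:ℝ)^l : ℝ)) : ℂ) - 1 = (((2:ℝ)^l - 1 : ℝ) : ℂ) by push_cast; ring,
      Complex.zero_le_real] at htr
    have h1 : (2:ℝ) ^ (0:ℝ) ≤ (2:ℝ) ^ l := by
      rw [Real.rpow_zero]; linarith
    exact (Real.rpow_le_rpow_left_iff one_lt_two).mp h1
  exact csInf_le_csInf hTbdd hSne hsub
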